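/- Let K≥2 be an integer, M=⌊K/2⌋, μ∈Δ_d, and H∈S^d. If ζ_1,…,ζ_K are i.i.d. with common distribution P_μ, then ln E[exp(Tr(H·ω[ζ^K]))] ≤ Φ_M(H; μμᵀ). -/

import Mathlib

open Matrix MeasureTheory Real

noncomputable section

open Nat

/-- The discrete distribution `P_μ` on ℝ^d assigning mass `μ i` to the basis vector `e_i`. -/
def discDist {d : ℕ} (μ : Fin d → ℝ) : Measure (Fin d → ℝ) :=
  ∑ i, ENNReal.ofReal (μ i) • Measure.dirac (Pi.single i 1)

/-- `ω_{ij} = (1/2)(ζ_iζ_jᵀ + ζ_jζ_iᵀ)` for two vectors. -/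
def omegaPair {d : ℕ} (a b : Fin d → ℝ) : Matrix (Fin d) (Fin d) ℝ :=
  (1/2 : ℝ) • (vecMulVec a b + vecMulVec b a)

/-- The quadratic lifting `ω[ζ^K] = (2/(K(K−1)))·Σ_{i<j} ω_{ij}[ζ^K]`. -/
def omegaLift {d K : ℕ} (ζ : Fin K → Fin d → ℝ) : Matrix (Fin d) (Fin d) ℝ :=
  (2 / ((K : ℝ) * ((K : ℝ) - 1))) •
    ∑ p ∈ Finset.univ.filter (fun p : Fin K × Fin K => p.1 < p.2),
      omegaPair (ζ p.1) (ζ p.2)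

/-- `Φ(H;Z) = ln(Σ_{i,j} Z_{ij} e^{H_{ij}})`. -/
def PhiD {d : ℕ} (H Z : Matrix (Fin d) (Fin d) ℝ) : ℝ :=
  Real.log (∑ i, ∑ j, Z i j * Real.exp (H i j))

lemma discDist_apply {d : ℕ} (μ : Fin d → ℝ) (s : Set (Fin d → ℝ)) (hs : MeasurableSet s) :
    discDist μ s = ∑ j, ENNReal.ofReal (μ j) * Measure.dirac (Pi.single j 1) s := by
  rw [discDist, Measure.finset_sum_apply]
  simp_rw [Measure.smul_apply, smul_eq_mul]

/-- decomposition of the product measure into weighted diracs -/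
lemma pi_discDist_eq {d K : ℕ} (μ : Fin d → ℝ) :
    (Measure.pi fun _ : Fin K => discDist μ)
      = ∑ f : Fin K → Fin d, (∏ k, ENNReal.ofReal (μ (f k))) •
          Measure.dirac (fun k => Pi.single (f k) 1) := by
  haveI : IsFiniteMeasure (discDist μ) := by
    constructor
    rw [discDist, Measure.finset_sum_apply]
    simp_rw [Measure.smul_apply, smul_eq_mul, measure_univ, mul_one]
    exact ENNReal.sum_lt_top.2 fun i _ => ENNReal.ofReal_lt_top
  apply Measure.pi_eq
  intro s hs
  classical
  rw [Measure.finset_sum_apply]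
  have hdir : ∀ (f : Fin K → Fin d),
      Measure.dirac (α := Fin K → Fin d → ℝ) (fun k => Pi.single (f k) 1) (Set.pi Set.univ s)
        = ∏ k, Measure.dirac (α := Fin d → ℝ) (Pi.single (f k) 1) (s k) := by
    intro f
    rw [Measure.dirac_apply' _ (MeasurableSet.univ_pi hs)]
    have hd : ∀ k, Measure.dirac (α := Fin d → ℝ) (Pi.single (f k) 1) (s k)
        = Set.indicator (s k) 1 (Pi.single (f k) 1) := fun k => Measure.dirac_apply' _ (hs k)
    rw [Set.indicator_apply]
    simp only [hd, Set.mem_univ_pi, Pi.one_apply]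
    by_cases h : ∀ k, Pi.single (f k) 1 ∈ s k
    · rw [if_pos h]
      symm; apply Finset.prod_eq_one; intro k _; rw [Set.indicator_of_mem (h k)]; rfl
    · push_neg at h
      obtain ⟨k, hk⟩ := h
      rw [if_neg (by push_neg; exact ⟨k, hk⟩)]
      symm; apply Finset.prod_eq_zero (Finset.mem_univ k); rw [Set.indicator_of_notMem hk]
  simp_rw [Measure.smul_apply, smul_eq_mul, hdir, ← Finset.prod_mul_distrib]
  have h2 : ∀ i : Fin K, discDist μ (s i)
      = ∑ j, ENNReal.ofReal (μ j) * Measure.dirac (Pi.single j 1) (s i) :=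
    fun i => discDist_apply μ (s i) (hs i)
  simp_rw [h2]
  rw [Finset.prod_univ_sum]
  simp [Fintype.piFinset_univ]

lemma lintegral_pi_discDist {d K : ℕ} (μ : Fin d → ℝ) (F : (Fin K → Fin d → ℝ) → ENNReal) :
    ∫⁻ ζ, F ζ ∂(Measure.pi fun _ : Fin K => discDist μ)
      = ∑ f : Fin K → Fin d, (∏ k, ENNReal.ofReal (μ (f k))) * F (fun k => Pi.single (f k) 1) := by
  rw [pi_discDist_eq, lintegral_finset_sum_measure]
  simp_rw [lintegral_smul_measure, lintegral_dirac, smul_eq_mul]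


lemma trace_mul_vecMulVec {d : ℕ} (H : Matrix (Fin d) (Fin d) ℝ) (x y : Fin d) :
    (H * vecMulVec (Pi.single x 1) (Pi.single y 1)).trace = H y x := by
  simp [Matrix.trace, Matrix.diag, Matrix.mul_apply, Matrix.vecMulVec_apply, Pi.single_apply,
    Finset.sum_ite_eq, Finset.sum_ite_eq', mul_ite, ite_mul, mul_comm]

lemma trace_mul_omegaPair {d : ℕ} (H : Matrix (Fin d) (Fin d) ℝ) (hH : H.IsSymm) (x y : Fin d) :
    (H * omegaPair (Pi.single x 1) (Pi.single y 1)).trace = H x y := by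
  rw [omegaPair, Matrix.mul_smul, Matrix.trace_smul, Matrix.mul_add, Matrix.trace_add,
    trace_mul_vecMulVec, trace_mul_vecMulVec]
  rw [hH.apply x y, smul_eq_mul]
  ring

lemma trace_mul_omegaLift {d K : ℕ} (H : Matrix (Fin d) (Fin d) ℝ) (hH : H.IsSymm)
    (f : Fin K → Fin d) :
    (H * omegaLift (fun k => Pi.single (f k) 1)).trace
      = (2 / ((K : ℝ) * ((K : ℝ) - 1))) *
        ∑ p ∈ Finset.univ.filter (fun p : Fin K × Fin K => p.1 < p.2), H (f p.1) (f p.2) := by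
  rw [omegaLift, Matrix.mul_smul, Matrix.trace_smul, Matrix.mul_sum, Matrix.trace_sum,
    smul_eq_mul]
  congr 1
  exact Finset.sum_congr rfl fun p _ => trace_mul_omegaPair H hH (f p.1) (f p.2)

lemma exists_perm01 {n : ℕ} (a b : Fin (n+2)) (hab : a ≠ b) :
    ∃ τ : Equiv.Perm (Fin (n+2)), τ 0 = a ∧ τ 1 = b := by
  have h01 : (0 : Fin (n+2)) ≠ 1 := by simp [Fin.ext_iff]
  have hc0 : Equiv.swap 0 a b ≠ 0 := by
    intro h
    apply hab
    have := congrArg (Equiv.swap (0 : Fin (n+2)) a) h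
    rw [Equiv.swap_apply_self, Equiv.swap_apply_left] at this
    exact this.symm
  refine ⟨Equiv.swap 0 a * Equiv.swap 1 (Equiv.swap 0 a b), ?_, ?_⟩
  · rw [Equiv.Perm.mul_apply, Equiv.swap_apply_of_ne_of_ne h01 (Ne.symm hc0),
      Equiv.swap_apply_left]
  · rw [Equiv.Perm.mul_apply, Equiv.swap_apply_left, Equiv.swap_apply_self]

lemma sum_perm_pair_eq {n : ℕ} (g : Fin (n+2) → Fin (n+2) → ℝ) (a b : Fin (n+2)) (hab : a ≠ b) :
    ∑ pe : Equiv.Perm (Fin (n+2)), g (pe a) (pe b)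
      = ∑ pe : Equiv.Perm (Fin (n+2)), g (pe 0) (pe 1) := by
  obtain ⟨τ, h0, h1⟩ := exists_perm01 a b hab
  have := Equiv.sum_comp (Equiv.mulRight τ)
    (fun pe : Equiv.Perm (Fin (n+2)) => g (pe 0) (pe 1))
  simp only [Equiv.coe_mulRight, Equiv.Perm.mul_apply, h0, h1] at this
  exact this

lemma sum_perm_01 {n : ℕ} (g : Fin (n+2) → Fin (n+2) → ℝ) :
    ∑ pe : Equiv.Perm (Fin (n+2)), g (pe 0) (pe 1)
      = (n ! : ℝ) * ∑ u : Fin (n+2), ∑ v ∈ Finset.univ.erase u, g u v := by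
  rw [← Equiv.sum_comp (Equiv.Perm.decomposeFin.symm)
    (fun pe : Equiv.Perm (Fin (n+2)) => g (pe 0) (pe 1)), Fintype.sum_prod_type]
  simp only [Equiv.Perm.decomposeFin_symm_apply_zero, Equiv.Perm.decomposeFin_symm_apply_one]
  have inner : ∀ h : Fin (n+1) → ℝ,
      ∑ σ : Equiv.Perm (Fin (n+1)), h (σ 0) = (n ! : ℝ) * ∑ q, h q := by
    intro h
    rw [← Equiv.sum_comp (Equiv.Perm.decomposeFin.symm)
      (fun σ : Equiv.Perm (Fin (n+1)) => h (σ 0)), Fintype.sum_prod_type]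
    simp only [Equiv.Perm.decomposeFin_symm_apply_zero, Finset.sum_const,
      Fintype.card_perm, Fintype.card_fin, nsmul_eq_mul, Finset.card_univ]
    rw [Finset.mul_sum]
  have hrw : ∀ u : Fin (n+2),
      ∑ σ : Equiv.Perm (Fin (n+1)), g u (Equiv.swap 0 u (σ 0).succ)
        = (n ! : ℝ) * ∑ q : Fin (n+1), g u (Equiv.swap 0 u q.succ) := fun u => inner (fun q => g u (Equiv.swap 0 u q.succ))
  simp_rw [hrw]
  rw [← Finset.mul_sum]
  congr 1
  apply Finset.sum_congr rfl
  intro u _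
  refine Finset.sum_nbij' (i := fun q : Fin (n+1) => Equiv.swap (0 : Fin (n+2)) u q.succ)
    (j := fun v : Fin (n+2) => (⟨(Equiv.swap (0 : Fin (n+2)) u v).val - 1, by
      have := (Equiv.swap (0 : Fin (n+2)) u v).isLt; omega⟩ : Fin (n+1)))
    ?_ ?_ ?_ ?_ ?_
  · intro q _
    rw [Finset.mem_erase]
    refine ⟨?_, Finset.mem_univ _⟩
    intro h
    apply Fin.succ_ne_zero q
    have := congrArg (Equiv.swap (0 : Fin (n+2)) u) h
    rwa [Equiv.swap_apply_self, Equiv.swap_apply_right] at this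
  · intro v _
    exact Finset.mem_univ _
  · intro q _
    simp [Equiv.swap_apply_self, Fin.ext_iff, Fin.val_succ]
  · intro v hv
    have hvu : v ≠ u := (Finset.mem_erase.1 hv).1
    have hw : Equiv.swap (0 : Fin (n+2)) u v ≠ 0 := by
      intro h
      apply hvu
      have := congrArg (Equiv.swap (0 : Fin (n+2)) u) h
      rwa [Equiv.swap_apply_self, Equiv.swap_apply_left] at this
    have hwv : (Equiv.swap (0 : Fin (n+2)) u v).val ≠ 0 := by
      intro h; exact hw (Fin.ext h)
    have hsucc : (⟨(Equiv.swap (0 : Fin (n+2)) u v).val - 1, by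
        have := (Equiv.swap (0 : Fin (n+2)) u v).isLt; omega⟩ : Fin (n+1)).succ
        = Equiv.swap (0 : Fin (n+2)) u v := by
      rw [Fin.ext_iff, Fin.val_succ]
      simp only []
      omega
    show Equiv.swap (0 : Fin (n+2)) u _ = v
    rw [hsucc, Equiv.swap_apply_self]
  · intro q _
    rfl

lemma sum_erase_eq_two_mul {K : ℕ} (g : Fin K → Fin K → ℝ) (hg : ∀ i j, g i j = g j i) :
    ∑ u : Fin K, ∑ v ∈ Finset.univ.erase u, g u v
      = 2 * ∑ p ∈ Finset.univ.filter (fun p : Fin K × Fin K => p.1 < p.2), g p.1 p.2 := by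
  classical
  have h1 : ∑ p ∈ Finset.univ.filter (fun p : Fin K × Fin K => p.1 < p.2), g p.1 p.2
      = ∑ u : Fin K, ∑ v : Fin K, if u < v then g u v else 0 := by
    rw [Finset.sum_filter, Fintype.sum_prod_type]
  have h2 : ∀ u : Fin K, ∑ v ∈ Finset.univ.erase u, g u v
      = ∑ v : Fin K, if v ≠ u then g u v else 0 := by
    intro u
    rw [← Finset.filter_ne', Finset.sum_filter]
  have h3 : ∀ u v : Fin K, (if v ≠ u then g u v else 0)
      = (if u < v then g u v else 0) + (if v < u then g u v else 0) := by
    intro u v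
    rcases lt_trichotomy u v with h | h | h
    · rw [if_pos h.ne', if_pos h, if_neg (asymm h), add_zero]
    · subst h; simp
    · rw [if_pos h.ne, if_neg (asymm h), if_pos h, zero_add]
  simp_rw [h2, h3, Finset.sum_add_distrib]
  have h4 : ∑ u : Fin K, ∑ v : Fin K, (if v < u then g u v else 0)
      = ∑ u : Fin K, ∑ v : Fin K, (if u < v then g u v else 0) := by
    rw [Finset.sum_comm]
    apply Finset.sum_congr rfl; intro u _
    apply Finset.sum_congr rfl; intro v _
    rw [hg]
  rw [h4, ← h1]
  ring

lemma perm_avg_identity {n : ℕ} (g : Fin (n+2) → Fin (n+2) → ℝ) (hg : ∀ i j, g i j = g j i)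
    {M : ℕ} (a b : Fin M → Fin (n+2)) (hab : ∀ m, a m ≠ b m) :
    ∑ pe : Equiv.Perm (Fin (n+2)), ∑ m : Fin M, g (pe (a m)) (pe (b m))
      = (M : ℝ) * ((n ! : ℝ) * (2 *
          ∑ p ∈ Finset.univ.filter (fun p : Fin (n+2) × Fin (n+2) => p.1 < p.2), g p.1 p.2)) := by
  rw [Finset.sum_comm]
  have key : ∀ m : Fin M, ∑ pe : Equiv.Perm (Fin (n+2)), g (pe (a m)) (pe (b m))
      = (n ! : ℝ) * (2 *
          ∑ p ∈ Finset.univ.filter (fun p : Fin (n+2) × Fin (n+2) => p.1 < p.2), g p.1 p.2) := by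
    intro m
    rw [sum_perm_pair_eq g _ _ (hab m), sum_perm_01, sum_erase_eq_two_mul g hg]
  simp_rw [key]
  rw [Finset.sum_const, Finset.card_univ, Fintype.card_fin, nsmul_eq_mul]

lemma sum_prod_one {d s : ℕ} (μ : Fin d → ℝ) :
    ∑ w : Fin s → Fin d, ∏ j, μ (w j) = (∑ i, μ i) ^ s := by
  classical
  rw [← Fintype.piFinset_univ, ← Finset.prod_univ_sum]
  simp [Finset.prod_const]

lemma sum_sum_prod_psi {d M : ℕ} (ψ : Fin d → Fin d → ℝ) :
    ∑ u : Fin M → Fin d, ∑ v : Fin M → Fin d, ∏ m, ψ (u m) (v m)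
      = (∑ i, ∑ j, ψ i j) ^ M := by
  classical
  have inner : ∀ u : Fin M → Fin d,
      ∑ v : Fin M → Fin d, ∏ m, ψ (u m) (v m) = ∏ m, ∑ j, ψ (u m) j := by
    intro u
    rw [← Fintype.piFinset_univ, ← Finset.prod_univ_sum]
  simp_rw [inner]
  rw [← Fintype.piFinset_univ, ← Finset.prod_univ_sum
    (fun _ : Fin M => (Finset.univ : Finset (Fin d))) (fun _ a => ∑ j, ψ a j)]
  simp [Finset.prod_const]

lemma sum_prod_exp_pairs {d M s K : ℕ} (μ : Fin d → ℝ) (hμ1 : ∑ i, μ i = 1)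
    (ψ : Fin d → Fin d → ℝ) (ep : ((Fin M ⊕ Fin M) ⊕ Fin s) ≃ Fin K) :
    ∑ f : Fin K → Fin d, (∏ k, μ (f k)) *
        ∏ m : Fin M, ψ (f (ep (Sum.inl (Sum.inl m)))) (f (ep (Sum.inl (Sum.inr m))))
      = (∑ i, ∑ j, μ i * μ j * ψ i j) ^ M := by
  classical
  let E : ((Fin M → Fin d) × (Fin M → Fin d) × (Fin s → Fin d)) ≃ (Fin K → Fin d) :=
    { toFun := fun t k => Sum.elim (Sum.elim t.1 t.2.1) t.2.2 (ep.symm k)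
      invFun := fun f => (fun m => f (ep (Sum.inl (Sum.inl m))),
        fun m => f (ep (Sum.inl (Sum.inr m))), fun j => f (ep (Sum.inr j)))
      left_inv := by
        rintro ⟨u, v, w⟩
        simp
      right_inv := by
        intro f
        funext k
        show Sum.elim _ _ (ep.symm k) = f k
        conv_rhs => rw [← ep.apply_symm_apply k]
        rcases ep.symm k with (m | m) | j <;> simp }
  rw [← Equiv.sum_comp E (fun f => (∏ k, μ (f k)) *
        ∏ m : Fin M, ψ (f (ep (Sum.inl (Sum.inl m)))) (f (ep (Sum.inl (Sum.inr m)))))]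
  have hEval : ∀ t (x : (Fin M ⊕ Fin M) ⊕ Fin s), E t (ep x) = Sum.elim (Sum.elim t.1 t.2.1) t.2.2 x := by
    intro t x
    show Sum.elim _ _ (ep.symm (ep x)) = _
    rw [ep.symm_apply_apply]
  have hprod : ∀ t : ((Fin M → Fin d) × (Fin M → Fin d) × (Fin s → Fin d)),
      ∏ k, μ (E t k) = (∏ m, μ (t.1 m)) * (∏ m, μ (t.2.1 m)) * (∏ j, μ (t.2.2 j)) := by
    intro t
    have : ∏ k, μ (E t k) = ∏ x : (Fin M ⊕ Fin M) ⊕ Fin s, μ (Sum.elim (Sum.elim t.1 t.2.1) t.2.2 x) := by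
      rw [← Equiv.prod_comp ep (fun k => μ (E t k))]
      exact Finset.prod_congr rfl fun x _ => by rw [hEval]
    rw [this, Fintype.prod_sum_type, Fintype.prod_sum_type]
    simp
  simp only [hEval, hprod, Sum.elim_inl, Sum.elim_inr]
  rw [Fintype.sum_prod_type]
  simp only [Fintype.sum_prod_type]
  have step : ∀ (u v : Fin M → Fin d),
      ∑ w : Fin s → Fin d,
        (∏ m, μ (u m)) * (∏ m, μ (v m)) * (∏ j, μ (w j)) *
          ∏ m : Fin M, ψ (u m) (v m)
        = ∏ m, (μ (u m) * μ (v m) * ψ (u m) (v m)) := by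
    intro u v
    have hone := sum_prod_one (s := s) μ
    rw [hμ1, one_pow] at hone
    rw [← Finset.sum_mul, ← Finset.mul_sum, hone, mul_one,
      Finset.prod_mul_distrib, Finset.prod_mul_distrib]
  rw [show (∑ u : Fin M → Fin d, ∑ v : Fin M → Fin d, ∑ w : Fin s → Fin d,
      ((∏ m, μ (u m)) * ∏ m, μ (v m)) * (∏ j, μ (w j)) * ∏ m : Fin M, ψ (u m) (v m))
      = ∑ u : Fin M → Fin d, ∑ v : Fin M → Fin d, ∏ m, (μ (u m) * μ (v m) * ψ (u m) (v m)) from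
    Finset.sum_congr rfl fun u _ => Finset.sum_congr rfl fun v _ => step u v]
  exact sum_sum_prod_psi (fun i j => μ i * μ j * ψ i j)

lemma core_ineq {d n : ℕ} (μ : Fin d → ℝ) (hμ0 : ∀ i, 0 ≤ μ i) (hμ1 : ∑ i, μ i = 1)
    (B : Fin d → Fin d → ℝ) (hB : ∀ i j, B i j = B j i) :
    ∑ f : Fin (n+2) → Fin d, (∏ k, μ (f k)) *
        Real.exp ((2 / (((n:ℝ)+2) * (((n:ℝ)+2) - 1))) *
          ∑ p ∈ Finset.univ.filter (fun p : Fin (n+2) × Fin (n+2) => p.1 < p.2),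
            B (f p.1) (f p.2))
      ≤ (∑ i, ∑ j, μ i * μ j * Real.exp (B i j / (((n+2)/2 : ℕ) : ℝ))) ^ ((n+2)/2 : ℕ) := by
  classical
  set M : ℕ := (n+2)/2 with hM
  set s : ℕ := (n+2) - 2*M with hs
  have hM1 : 1 ≤ M := by omega
  have hcard : Fintype.card (((Fin M ⊕ Fin M) ⊕ Fin s)) = Fintype.card (Fin (n+2)) := by
    simp only [Fintype.card_sum, Fintype.card_fin]
    omega
  obtain ep := Fintype.equivOfCardEq hcard
  set a : Fin M → Fin (n+2) := fun m => ep (Sum.inl (Sum.inl m)) with ha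
  set b : Fin M → Fin (n+2) := fun m => ep (Sum.inl (Sum.inr m)) with hb
  have hab : ∀ m, a m ≠ b m := by
    intro m h
    have := ep.injective h
    simp at this
  -- weights
  set w : ℝ := 1 / ((n+2)! : ℝ) with hw
  have hw0 : 0 ≤ w := by positivity
  have hcardperm : (Fintype.card (Equiv.Perm (Fin (n+2))) : ℝ) = ((n+2)! : ℝ) := by
    rw [Fintype.card_perm, Fintype.card_fin]
  have hwsum : ∑ _pe : Equiv.Perm (Fin (n+2)), w = 1 := by
    rw [Finset.sum_const, Finset.card_univ, nsmul_eq_mul, hcardperm, hw]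
    rw [mul_one_div, div_self]
    positivity
  -- the exponent identity for a fixed f
  have hident : ∀ f : Fin (n+2) → Fin d,
      (2 / (((n:ℝ)+2) * (((n:ℝ)+2) - 1))) *
          ∑ p ∈ Finset.univ.filter (fun p : Fin (n+2) × Fin (n+2) => p.1 < p.2),
            B (f p.1) (f p.2)
        = ∑ pe : Equiv.Perm (Fin (n+2)),
            w * ((1/(M:ℝ)) * ∑ m : Fin M, B (f (pe (a m))) (f (pe (b m)))) := by
    intro f
    have := perm_avg_identity (fun u v => B (f u) (f v)) (fun i j => hB _ _) a b hab
    rw [← Finset.mul_sum, ← Finset.mul_sum, this]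
    have hfact : ((n+2)! : ℝ) = ((n:ℝ)+2) * (((n:ℝ)+1)) * (n ! : ℝ) := by
      rw [show n+2 = (n+1)+1 from rfl, Nat.factorial_succ, Nat.factorial_succ]
      push_cast
      ring
    have hM0 : (M:ℝ) ≠ 0 := by
      simp only [ne_eq, Nat.cast_eq_zero]
      omega
    have hfact0 : (n ! : ℝ) ≠ 0 := by positivity
    rw [hw, hfact, show ((n:ℝ)+2) - 1 = (n:ℝ)+1 by ring]
    have hn2 : ((n:ℝ)+2) ≠ 0 := by positivity
    have hn1 : ((n:ℝ)+1) ≠ 0 := by positivity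
    field_simp
  -- Jensen
  have jensen : ∀ f : Fin (n+2) → Fin d,
      Real.exp ((2 / (((n:ℝ)+2) * (((n:ℝ)+2) - 1))) *
          ∑ p ∈ Finset.univ.filter (fun p : Fin (n+2) × Fin (n+2) => p.1 < p.2),
            B (f p.1) (f p.2))
        ≤ ∑ pe : Equiv.Perm (Fin (n+2)),
            w * Real.exp ((1/(M:ℝ)) * ∑ m : Fin M, B (f (pe (a m))) (f (pe (b m)))) := by
    intro f
    rw [hident f]
    have := convexOn_exp.map_sum_le (t := Finset.univ)
      (w := fun _pe : Equiv.Perm (Fin (n+2)) => w)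
      (p := fun pe : Equiv.Perm (Fin (n+2)) =>
        (1/(M:ℝ)) * ∑ m : Fin M, B (f (pe (a m))) (f (pe (b m))))
      (fun _ _ => hw0) hwsum (fun _ _ => Set.mem_univ _)
    simpa [smul_eq_mul] using this
  -- reindexing: value for each permutation equals the canonical one
  set T : ℝ := ∑ i, ∑ j, μ i * μ j * Real.exp (B i j / (M : ℝ)) with hT
  have hcanon : ∀ pe : Equiv.Perm (Fin (n+2)),
      ∑ f : Fin (n+2) → Fin d, (∏ k, μ (f k)) *
          Real.exp ((1/(M:ℝ)) * ∑ m : Fin M, B (f (pe (a m))) (f (pe (b m))))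
        = T ^ M := by
    intro pe
    have hre := Equiv.sum_comp (Equiv.arrowCongr (pe : Fin (n+2) ≃ Fin (n+2))
        (Equiv.refl (Fin d)))
      (fun f : Fin (n+2) → Fin d => (∏ k, μ (f k)) *
          Real.exp ((1/(M:ℝ)) * ∑ m : Fin M, B (f (pe (a m))) (f (pe (b m)))))
    rw [← hre]
    have heq : ∀ f : Fin (n+2) → Fin d,
        (Equiv.arrowCongr (pe : Fin (n+2) ≃ Fin (n+2)) (Equiv.refl (Fin d))) f
          = fun k => f (pe.symm k) := by
      intro f
      funext k
      simp [Equiv.arrowCongr]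
    calc ∑ f : Fin (n+2) → Fin d,
          (∏ k, μ ((Equiv.arrowCongr (pe : Fin (n+2) ≃ Fin (n+2)) (Equiv.refl (Fin d))) f k)) *
          Real.exp ((1/(M:ℝ)) * ∑ m : Fin M,
            B (((Equiv.arrowCongr (pe : Fin (n+2) ≃ Fin (n+2)) (Equiv.refl (Fin d))) f) (pe (a m)))
              (((Equiv.arrowCongr (pe : Fin (n+2) ≃ Fin (n+2)) (Equiv.refl (Fin d))) f) (pe (b m))))
        = ∑ f : Fin (n+2) → Fin d, (∏ k, μ (f k)) *
          Real.exp ((1/(M:ℝ)) * ∑ m : Fin M, B (f (a m)) (f (b m))) := by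
          apply Finset.sum_congr rfl
          intro f _
          rw [heq f]
          congr 1
          · exact Equiv.prod_comp (pe : Fin (n+2) ≃ Fin (n+2)).symm (fun k => μ (f k))
          · congr 1
            congr 1
            apply Finset.sum_congr rfl
            intro m _
            simp
      _ = T ^ M := by
          have hexp : ∀ f : Fin (n+2) → Fin d,
              Real.exp ((1/(M:ℝ)) * ∑ m : Fin M, B (f (a m)) (f (b m)))
                = ∏ m : Fin M, Real.exp (B (f (a m)) (f (b m)) / (M:ℝ)) := by
            intro f
            rw [← Real.exp_sum]
            congr 1
            rw [Finset.mul_sum]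
            apply Finset.sum_congr rfl
            intro m _
            ring
          simp_rw [hexp]
          exact sum_prod_exp_pairs μ hμ1 (fun i j => Real.exp (B i j / (M:ℝ))) ep
  -- put everything together
  calc ∑ f : Fin (n+2) → Fin d, (∏ k, μ (f k)) *
        Real.exp ((2 / (((n:ℝ)+2) * (((n:ℝ)+2) - 1))) *
          ∑ p ∈ Finset.univ.filter (fun p : Fin (n+2) × Fin (n+2) => p.1 < p.2),
            B (f p.1) (f p.2))
      ≤ ∑ f : Fin (n+2) → Fin d, (∏ k, μ (f k)) *
          (∑ pe : Equiv.Perm (Fin (n+2)),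
            w * Real.exp ((1/(M:ℝ)) * ∑ m : Fin M, B (f (pe (a m))) (f (pe (b m))))) := by
        apply Finset.sum_le_sum
        intro f _
        exact mul_le_mul_of_nonneg_left (jensen f) (Finset.prod_nonneg fun k _ => hμ0 _)
    _ = ∑ pe : Equiv.Perm (Fin (n+2)), w *
          (∑ f : Fin (n+2) → Fin d, (∏ k, μ (f k)) *
            Real.exp ((1/(M:ℝ)) * ∑ m : Fin M, B (f (pe (a m))) (f (pe (b m))))) := by
        simp_rw [Finset.mul_sum]
        rw [Finset.sum_comm]
        apply Finset.sum_congr rfl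
        intro pe _
        apply Finset.sum_congr rfl
        intro f _
        ring
    _ = ∑ _pe : Equiv.Perm (Fin (n+2)), w * T ^ M := by
        apply Finset.sum_congr rfl
        intro pe _
        rw [hcanon pe]
    _ = T ^ M := by
        rw [← Finset.sum_mul, hwsum, one_mul]

/-- for i.i.d. `ζ_1,…,ζ_K ∼ P_μ` and symmetric `H`,
`ln E[exp(Tr(H·ω[ζ^K]))] ≤ Φ_M(H; μμᵀ)` with `M = ⌊K/2⌋`. -/
theorem statement8 {d K : ℕ} (hK : 2 ≤ K) (μ : Fin d → ℝ)
    (hμ0 : ∀ i, 0 ≤ μ i) (hμ1 : ∑ i, μ i = 1)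
    (H : Matrix (Fin d) (Fin d) ℝ) (hHsym : H.IsSymm) :
    ∫⁻ ζ, ENNReal.ofReal (Real.exp ((H * omegaLift ζ).trace))
        ∂(Measure.pi fun _ : Fin K => discDist μ)
      ≤ ENNReal.ofReal (Real.exp (((K / 2 : ℕ) : ℝ) *
          PhiD ((((K / 2 : ℕ) : ℝ))⁻¹ • H) (vecMulVec μ μ))) := by
  obtain ⟨n, rfl⟩ : ∃ n, K = n + 2 := ⟨K - 2, by omega⟩
  rw [lintegral_pi_discDist]
  have hcast : ((n + 2 : ℕ) : ℝ) = (n : ℝ) + 2 := by push_cast; ring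
  have hterm : ∀ f : Fin (n+2) → Fin d,
      (∏ k, ENNReal.ofReal (μ (f k))) *
        ENNReal.ofReal (Real.exp ((H * omegaLift fun k => Pi.single (f k) 1).trace))
      = ENNReal.ofReal ((∏ k, μ (f k)) *
          Real.exp ((2 / (((n:ℝ)+2) * (((n:ℝ)+2) - 1))) *
            ∑ p ∈ Finset.univ.filter (fun p : Fin (n+2) × Fin (n+2) => p.1 < p.2),
              H (f p.1) (f p.2))) := by
    intro f
    rw [trace_mul_omegaLift H hHsym f, hcast]
    rw [ENNReal.ofReal_mul (Finset.prod_nonneg fun k _ => hμ0 _),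
      ENNReal.ofReal_prod_of_nonneg fun k _ => hμ0 _]
  simp_rw [hterm]
  rw [← ENNReal.ofReal_sum_of_nonneg (fun f _ =>
    mul_nonneg (Finset.prod_nonneg fun k _ => hμ0 _) (Real.exp_nonneg _))]
  apply ENNReal.ofReal_le_ofReal
  have hcore := core_ineq (n := n) μ hμ0 hμ1 (fun i j => H i j) (fun i j => hHsym.apply j i)
  refine le_trans hcore (le_of_eq ?_)
  set M : ℕ := (n+2)/2 with hM
  set T : ℝ := ∑ i, ∑ j, μ i * μ j * Real.exp (H i j / (M : ℝ)) with hT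
  obtain ⟨i0, hi0⟩ : ∃ i, 0 < μ i := by
    by_contra h
    push_neg at h
    have : ∑ i, μ i ≤ 0 := Finset.sum_nonpos fun i _ => h i
    rw [hμ1] at this
    linarith
  have hTpos : 0 < T := by
    apply Finset.sum_pos' (fun i _ => Finset.sum_nonneg fun j _ =>
      mul_nonneg (mul_nonneg (hμ0 i) (hμ0 j)) (Real.exp_nonneg _))
    refine ⟨i0, Finset.mem_univ _, ?_⟩
    apply Finset.sum_pos' (fun j _ =>
      mul_nonneg (mul_nonneg (hμ0 i0) (hμ0 j)) (Real.exp_nonneg _))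
    exact ⟨i0, Finset.mem_univ _, mul_pos (mul_pos hi0 hi0) (Real.exp_pos _)⟩
  have hPhi : PhiD (((((n+2) / 2 : ℕ) : ℝ))⁻¹ • H) (vecMulVec μ μ) = Real.log T := by
    rw [PhiD]
    congr 1
    apply Finset.sum_congr rfl
    intro i _
    apply Finset.sum_congr rfl
    intro j _
    rw [Matrix.vecMulVec_apply, Matrix.smul_apply, smul_eq_mul, inv_mul_eq_div]
  rw [hPhi, Real.exp_nat_mul, Real.exp_log hTpos]

end
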